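/- Let p be an odd prime, write p − 1 = 2^r·d with d odd and r ≥ 1, and let α, γ be nonzero elements of Z/pZ with α a quadratic residue. Suppose s and t are integers with 0 ≤ s < t ≤ r − 1 such that α^(2^s·d) = −1 and γ^(2^t·d) = −1 (i.e. f(γ) = t > s = f(α), so γ is a relative non-residue to α). Then there exists a positive integer m such that α^d · γ^(2md) = 1 in Z/pZ; consequently (α^((d+1)/2) · γ^(md))^2 = α, i.e. α^((d+1)/2) · γ^(md) is a square root of α modulo p. -/

import Mathlib

/-- **Theorem 5 (A relative non-residue suffices to compute square roots).**
Let `p` be an odd prime, `p - 1 = 2^r * d` with `d` odd, `α` a quadratic residue and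
`γ` nonzero, with f-values `f(α) = s < t = f(γ) ≤ r - 1` (so `γ` is a relative
non-residue to `α`). Then there is `m > 0` with `α^d * γ^(2md) = 1`, hence
`α^((d+1)/2) * γ^(md)` is a square root of `α` mod `p`. -/
theorem sqrt_mod_p_relative_nonresidue (p : ℕ) (hp : p.Prime) (hodd : Odd p)
    (r d : ℕ) (hr : 1 ≤ r) (hd : Odd d) (hpd : p - 1 = 2 ^ r * d)
    (α γ : ZMod p) (hα : α ≠ 0) (hγ : γ ≠ 0)
    (hαres : α ^ ((p - 1) / 2) = 1)
    (s t : ℕ) (hst : s < t) (ht : t ≤ r - 1)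
    (hαs : α ^ (2 ^ s * d) = -1) (hγt : γ ^ (2 ^ t * d) = -1) :
    ∃ m : ℕ, 0 < m ∧ α ^ d * γ ^ (2 * m * d) = 1 ∧
      (α ^ ((d + 1) / 2) * γ ^ (m * d)) ^ 2 = α := by
  haveI : Fact p.Prime := ⟨hp⟩
  haveI : Fact (2 < p) := ⟨by
    have h2 := hp.two_le
    rcases hodd with ⟨c, hc⟩
    omega⟩
  have hne : (-1 : ZMod p) ≠ 1 := ZMod.neg_one_ne_one
  set y : ZMod p := γ ^ (2 * d) with hy
  have hyneg : y ^ (2 ^ (t - 1)) = -1 := by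
    rw [hy, ← pow_mul]
    rw [show 2 * d * 2 ^ (t - 1) = 2 ^ t * d by
      rw [show t = (t - 1) + 1 by omega, pow_succ, Nat.add_sub_cancel]; ring]
    exact hγt
  have hyone : y ^ (2 ^ t) = 1 := by
    rw [show (2:ℕ) ^ t = 2 ^ (t-1) * 2 by rw [← pow_succ]; congr 1; omega,
      pow_mul, hyneg]; ring
  have key : ∀ j, j ≤ t → ∀ x : ZMod p, x ^ (2 ^ j) = 1 → ∃ k, x = y ^ k := by
    intro j
    induction j with
    | zero => intro _ x hx; exact ⟨0, by simpa using hx⟩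
    | succ j ih =>
      intro hj x hx
      have hsq : (x ^ (2 ^ j)) * (x ^ (2 ^ j)) = 1 := by
        rw [← pow_add, ← two_mul, ← pow_succ']; exact hx
      rcases mul_self_eq_one_iff.mp hsq with h1 | h1
      · exact ih (by omega) x h1
      · obtain ⟨k, hk⟩ := ih (by omega) (x * y ^ (2 ^ (t - 1 - j)))
          (by rw [mul_pow, ← pow_mul,
                show 2 ^ (t - 1 - j) * 2 ^ j = 2 ^ (t - 1) by rw [← pow_add]; congr 1; omega,
                hyneg, h1]; ring)
        refine ⟨k + (2 ^ t - 2 ^ (t - 1 - j)), ?_⟩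
        have hle : 2 ^ (t - 1 - j) ≤ 2 ^ t := Nat.pow_le_pow_right (by norm_num) (by omega)
        have h2 : x * y ^ (2 ^ (t - 1 - j)) * y ^ (2 ^ t - 2 ^ (t - 1 - j))
            = y ^ k * y ^ (2 ^ t - 2 ^ (t - 1 - j)) := by rw [hk]
        rw [mul_assoc, ← pow_add, Nat.add_sub_cancel' hle, hyone, mul_one] at h2
        rw [h2, ← pow_add]
  have hαd : (α ^ d) ^ (2 ^ (s + 1)) = 1 := by
    rw [← pow_mul, show d * 2 ^ (s + 1) = (2 ^ s * d) * 2 by ring, pow_mul, hαs]; ring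
  obtain ⟨k, hk⟩ := key (s + 1) (by omega) (α ^ d) hαd
  have hpos : 0 < 2 ^ t := Nat.pow_pos (by norm_num)
  have hdm := Nat.div_add_mod k (2 ^ t)
  have hml := Nat.mod_lt k hpos
  have hknz : k % 2 ^ t ≠ 0 := by
    intro h0
    have h3 : α ^ d = 1 := by
      rw [hk, show k = 2 ^ t * (k / 2 ^ t) by omega, pow_mul, hyone, one_pow]
    have h4 : α ^ (2 ^ s * d) = 1 := by rw [mul_comm, pow_mul, h3, one_pow]
    rw [hαs] at h4; exact hne h4
  have hmain : α ^ d * y ^ (2 ^ t - k % 2 ^ t) = 1 := by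
    rw [hk, ← pow_add,
      show k + (2 ^ t - k % 2 ^ t) = 2 ^ t * (k / 2 ^ t + 1) by rw [Nat.mul_succ]; omega,
      pow_mul, hyone, one_pow]
  refine ⟨2 ^ t - k % 2 ^ t, by omega, ?_, ?_⟩
  · rw [show 2 * (2 ^ t - k % 2 ^ t) * d = 2 * d * (2 ^ t - k % 2 ^ t) by ring, pow_mul]
    exact hmain
  · have hexp : (d + 1) / 2 * 2 = d + 1 := by
      rcases hd with ⟨c, hc⟩; omega
    rw [mul_pow, ← pow_mul, ← pow_mul, hexp,
      show (2 ^ t - k % 2 ^ t) * d * 2 = 2 * d * (2 ^ t - k % 2 ^ t) by ring,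
      pow_mul, pow_succ]
    calc α ^ d * α * y ^ (2 ^ t - k % 2 ^ t)
        = α * (α ^ d * y ^ (2 ^ t - k % 2 ^ t)) := by ring
      _ = α := by rw [hmain, mul_one]
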